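/- Let V be a finite-dimensional real inner product space and let Δ ⊆ V be a finite linearly independent set of vectors such that ⟨α, β⟩ ≤ 0 for all distinct α, β ∈ Δ. Let I ⊆ Δ be any subset and let α ∈ Δ ∖ I. Then there exist unique real numbers n_β ≥ 0, one for each β ∈ I, such that the vector χ_α = α + Σ_{β∈I} n_β·β is orthogonal to every element of I. -/

import Mathlib

open scoped RealInnerProductSpace

section Aux

variable {V : Type*} [NormedAddCommGroup V] [InnerProductSpace ℝ V]

/-- Coefficients in a linear combination of a linearly independent finite set vanishing are zero. -/
lemma auxPropertyR_zero_coeffs {I : Finset V}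
    (hli : LinearIndependent ℝ (fun v : (I : Set V) => (v : V)))
    (c : V → ℝ) (h : ∑ β ∈ I, c β • β = 0) : ∀ β ∈ I, c β = 0 := by
  have h2 : ∑ v : (I : Set V), c v • (v : V) = 0 := by
    rw [← h]
    exact Finset.sum_coe_sort I (fun β => c β • β)
  have := Fintype.linearIndependent_iff.mp hli (fun v => c v) h2
  intro β hβ
  exact this ⟨β, by exact_mod_cast hβ⟩

/-- Any solution to the orthogonality condition has non-negative coefficients. -/
lemma auxPropertyR_nonneg {Δ : Finset V}
    (hobtuse : ∀ α ∈ Δ, ∀ β ∈ Δ, α ≠ β → ⟪α, β⟫ ≤ 0)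
    {I : Finset V} (hI : I ⊆ Δ)
    (hli : LinearIndependent ℝ (fun v : (I : Set V) => (v : V)))
    {α : V} (hαΔ : α ∈ Δ) (hαI : α ∉ I)
    (n : V → ℝ)
    (horth : ∀ γ ∈ I, ⟪α + ∑ β ∈ I, n β • β, γ⟫ = 0) :
    ∀ β ∈ I, 0 ≤ n β := by
  classical
  set χ : V := α + ∑ β ∈ I, n β • β with hχ
  set N : Finset V := I.filter (fun β => ¬ 0 ≤ n β) with hN
  set P : Finset V := I.filter (fun β => 0 ≤ n β) with hP
  set v : V := ∑ β ∈ N, n β • β with hv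
  have hNI : N ⊆ I := Finset.filter_subset _ _
  have hPI : P ⊆ I := Finset.filter_subset _ _
  -- χ ⊥ v
  have hχv : ⟪χ, v⟫ = 0 := by
    rw [hv, inner_sum]
    apply Finset.sum_eq_zero
    intro γ hγ
    rw [real_inner_smul_right, horth γ (hNI hγ), mul_zero]
  -- decompose χ
  have hsplit : ∑ β ∈ I, n β • β = (∑ β ∈ P, n β • β) + v := by
    rw [hv, hP, hN]
    exact (Finset.sum_filter_add_sum_filter_not I _ _).symm
  have hαv : 0 ≤ ⟪α, v⟫ := by
    rw [hv, inner_sum]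
    apply Finset.sum_nonneg
    intro β hβ
    have hβI : β ∈ I := hNI hβ
    have hne : α ≠ β := fun h => hαI (h ▸ hβI)
    have h1 : ⟪α, β⟫ ≤ 0 := hobtuse α hαΔ β (hI hβI) hne
    have h2 : n β ≤ 0 := le_of_lt (lt_of_not_ge (Finset.mem_filter.mp hβ).2)
    rw [real_inner_smul_right]
    nlinarith
  have hPv : 0 ≤ ⟪∑ β ∈ P, n β • β, v⟫ := by
    rw [hv, inner_sum]
    apply Finset.sum_nonneg
    intro γ hγ
    rw [real_inner_smul_right, sum_inner]
    have hγn : n γ ≤ 0 := le_of_lt (lt_of_not_ge (Finset.mem_filter.mp hγ).2)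
    have hsn : ∑ β ∈ P, ⟪n β • β, γ⟫ ≤ 0 := ?_
    · nlinarith
    apply Finset.sum_nonpos
    intro β hβ
    have hβP := Finset.mem_filter.mp hβ
    have hγN := Finset.mem_filter.mp hγ
    have hne : β ≠ γ := by
      intro h; exact hγN.2 (h ▸ hβP.2)
    have h1 : ⟪β, γ⟫ ≤ 0 := hobtuse β (hI hβP.1) γ (hI hγN.1) hne
    rw [real_inner_smul_left]
    exact mul_nonpos_of_nonneg_of_nonpos hβP.2 h1
  have hvv : ⟪v, v⟫ ≤ 0 := by
    have : ⟪χ, v⟫ = ⟪α, v⟫ + ⟪∑ β ∈ P, n β • β, v⟫ + ⟪v, v⟫ := by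
      rw [hχ, hsplit, inner_add_left, inner_add_left]; ring
    nlinarith [this, hχv]
  have hv0 : v = 0 := by
    have := le_antisymm hvv real_inner_self_nonneg
    exact inner_self_eq_zero.mp this
  -- express v as a sum over I and use linear independence
  have hvI : ∑ β ∈ I, (if ¬ 0 ≤ n β then n β else 0) • β = 0 := by
    rw [← hv0, hv, hN]
    rw [Finset.sum_filter]
    apply Finset.sum_congr rfl
    intro β _
    split <;> simp
  have hzero := auxPropertyR_zero_coeffs hli _ hvI
  intro β hβ
  by_contra hne
  have := hzero β hβ
  rw [if_pos hne] at this
  exact hne (le_of_eq this.symm)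

end Aux

/-- Property (R) of root systems: given a finite linearly independent set `Δ` of vectors in a
real inner product space with pairwise non-positive inner products, a subset `I ⊆ Δ` and
`α ∈ Δ \ I`, there are unique non-negative reals `n β` (for `β ∈ I`) such that
`χ_α = α + ∑_{β ∈ I} n β • β` is orthogonal to every element of `I`. -/
theorem property_R_of_root_systems
    (V : Type*) [NormedAddCommGroup V] [InnerProductSpace ℝ V] [FiniteDimensional ℝ V]
    (Δ : Finset V)
    (hind : LinearIndependent ℝ (fun (v : (Δ : Set V)) => (v : V)))
    (hobtuse : ∀ α ∈ Δ, ∀ β ∈ Δ, α ≠ β → ⟪α, β⟫ ≤ 0)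
    (I : Finset V) (hI : I ⊆ Δ) (α : V) (hαΔ : α ∈ Δ) (hαI : α ∉ I) :
    ∃! n : V → ℝ,
      (∀ β ∈ I, 0 ≤ n β) ∧ (∀ β ∉ I, n β = 0) ∧
        ∀ γ ∈ I, ⟪α + ∑ β ∈ I, n β • β, γ⟫ = 0 := by
  classical
  have hli : LinearIndependent ℝ (fun v : (I : Set V) => (v : V)) :=
    ((hind.linearIndepOn_id' Subtype.range_coe).mono (by exact_mod_cast Finset.coe_subset.mpr hI)).linearIndependent
  -- existence via orthogonal projection onto span of I
  set K : Submodule ℝ V := Submodule.span ℝ (I : Set V) with hK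
  have hp : (K.orthogonalProjection α : V) ∈ K := Submodule.coe_mem _
  obtain ⟨f, -, hf⟩ := Submodule.mem_span_finset.mp hp
  set n : V → ℝ := fun β => if β ∈ I then -f β else 0 with hn
  have hsum : ∑ β ∈ I, n β • β = -(K.orthogonalProjection α : V) := by
    rw [← hf, ← Finset.sum_neg_distrib]
    apply Finset.sum_congr rfl
    intro β hβ
    rw [hn]
    simp [hβ, neg_smul]
  have horth : ∀ γ ∈ I, ⟪α + ∑ β ∈ I, n β • β, γ⟫ = 0 := by
    intro γ hγ
    rw [hsum]
    have hmem : α + -(K.orthogonalProjection α : V) ∈ Kᗮ := by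
      have := Submodule.sub_starProjection_mem_orthogonal (K := K) α
      rwa [sub_eq_add_neg] at this
    have hγK : γ ∈ K := Submodule.subset_span (by exact_mod_cast hγ)
    exact (Submodule.mem_orthogonal' K _).mp hmem γ hγK
  refine ⟨n, ⟨auxPropertyR_nonneg hobtuse hI hli hαΔ hαI n horth,
    fun β hβ => by simp [hn, hβ], horth⟩, ?_⟩
  -- uniqueness
  rintro m ⟨-, hm0, hmorth⟩
  have hdiff : ∑ β ∈ I, (m β - n β) • β = 0 := by
    have hsub : ∑ β ∈ I, (m β - n β) • β
        = (α + ∑ β ∈ I, m β • β) - (α + ∑ β ∈ I, n β • β) := by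
      simp only [sub_smul, Finset.sum_sub_distrib]
      abel
    have horth2 : ∀ γ ∈ I, ⟪∑ β ∈ I, (m β - n β) • β, γ⟫ = 0 := by
      intro γ hγ
      rw [hsub, inner_sub_left, hmorth γ hγ, horth γ hγ, sub_zero]
    -- the vector is in K and orthogonal to everything in K, hence zero
    have hmemK : ∑ β ∈ I, (m β - n β) • β ∈ K :=
      Submodule.sum_smul_mem K _ (fun β hβ => Submodule.subset_span (by exact_mod_cast hβ))
    have hmemKperp : ∑ β ∈ I, (m β - n β) • β ∈ Kᗮ := by
      rw [hK, Submodule.mem_orthogonal]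
      intro u hu
      refine Submodule.span_induction ?_ ?_ ?_ ?_ hu
      · intro x hx
        rw [real_inner_comm]
        exact horth2 x (by exact_mod_cast hx)
      · simp
      · intro x y _ _ hx hy; rw [inner_add_left, hx, hy, add_zero]
      · intro c x _ hx; rw [real_inner_smul_left, hx, mul_zero]
    exact Submodule.disjoint_def.mp K.orthogonal_disjoint _ hmemK hmemKperp
  have hzero := auxPropertyR_zero_coeffs hli _ hdiff
  funext β
  by_cases hβ : β ∈ I
  · have := hzero β hβ
    linarith [this]
  · rw [hm0 β hβ, hn]; simp [hβ]
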